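/- Let H : Matrix (Fin d) (Fin d) ℂ be Hermitian, ε ∈ ℝ, and ρ : Matrix (Fin d) (Fin d) ℂ with tr ρ ≠ 0. Set D := d^N and index vectors on the doubled space by pairs (f, h) of functions ZMod N → Fin d. Define Φ⁺ to be the (unnormalized) maximally entangled vector with entries Φ⁺ (f, h) = 1 if f = h and 0 otherwise, Ψ the vector with entries Ψ (f, h) = G f h (the Choi vector of G), and the generalized spacetime state R := (⟨Φ⁺, Ψ⟩)⁻¹ • vecMulVec Ψ (star Φ⁺) (i.e. R = |Ψ⟩⟨Φ⁺| / ⟨Φ⁺|Ψ⟩). Then: (i) ⟨Φ⁺, Ψ⟩ = Tr G = tr ρ (in particular it is nonzero); (ii) R * R = R; (iii) trace R = 1; (iv) the partial trace of R over the second (environment) factor, defined by (Tr_E R) f g := Σ_h R (f,h) (g,h), equals (tr ρ)⁻¹ • G. -/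

import Mathlib

open Matrix Complex NormedSpace

/-- The slice-wise Kronecker product `⊗_t A t`. -/
noncomputable def sliceProd (N d : ℕ) [NeZero N]
    (A : ZMod N → Matrix (Fin d) (Fin d) ℂ) :
    Matrix (ZMod N → Fin d) (ZMod N → Fin d) ℂ :=
  Matrix.of fun f g => ∏ t : ZMod N, A t (f t) (g t)

/-- The cyclic time-translation operator `𝒮`. -/
noncomputable def timeShift (N d : ℕ) [NeZero N] :
    Matrix (ZMod N → Fin d) (ZMod N → Fin d) ℂ :=
  Matrix.of fun f g => if ∀ t : ZMod N, f t = g (t - 1) then 1 else 0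

/-- The slice-local operator `B_t`. -/
noncomputable def sliceLocal (N d : ℕ) [NeZero N]
    (B : Matrix (Fin d) (Fin d) ℂ) (t : ZMod N) :
    Matrix (ZMod N → Fin d) (ZMod N → Fin d) ℂ :=
  sliceProd N d (fun t' => if t' = t then B else 1)

/-- `𝒱 := ⊗_t e^{iεtH}`. -/
noncomputable def Vop (N d : ℕ) [NeZero N] (H : Matrix (Fin d) (Fin d) ℂ) (ε : ℝ) :
    Matrix (ZMod N → Fin d) (ZMod N → Fin d) ℂ :=
  sliceProd N d (fun t => NormedSpace.exp ((Complex.I * (ε : ℂ) * (t.val : ℂ)) • H))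

/-- `G := ρ₀ e^{iS̃}` with `e^{iS̃} = 𝒱ᴴ 𝒮 𝒱`. -/
noncomputable def Gst (N d : ℕ) [NeZero N] (H : Matrix (Fin d) (Fin d) ℂ) (ε : ℝ)
    (ρ : Matrix (Fin d) (Fin d) ℂ) :
    Matrix (ZMod N → Fin d) (ZMod N → Fin d) ℂ :=
  sliceLocal N d ρ 0 * ((Vop N d H ε)ᴴ * timeShift N d * Vop N d H ε)

/-- The unnormalized maximally entangled vector `Φ⁺` on the doubled index set. -/
noncomputable def PhiPlus (N d : ℕ) [NeZero N] :
    ((ZMod N → Fin d) × (ZMod N → Fin d)) → ℂ :=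
  fun p => if p.1 = p.2 then 1 else 0

/-- The Choi vector `Ψ` of `G`. -/
noncomputable def PsiVec (N d : ℕ) [NeZero N] (H : Matrix (Fin d) (Fin d) ℂ) (ε : ℝ)
    (ρ : Matrix (Fin d) (Fin d) ℂ) :
    ((ZMod N → Fin d) × (ZMod N → Fin d)) → ℂ :=
  fun p => Gst N d H ε ρ p.1 p.2

/-- The generalized spacetime state `R = |Ψ⟩⟨Φ⁺| / ⟨Φ⁺|Ψ⟩`. -/
noncomputable def Rst (N d : ℕ) [NeZero N] (H : Matrix (Fin d) (Fin d) ℂ) (ε : ℝ)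
    (ρ : Matrix (Fin d) (Fin d) ℂ) :
    Matrix ((ZMod N → Fin d) × (ZMod N → Fin d))
      ((ZMod N → Fin d) × (ZMod N → Fin d)) ℂ :=
  (dotProduct (star (PhiPlus N d)) (PsiVec N d H ε ρ))⁻¹ •
    Matrix.vecMulVec (PsiVec N d H ε ρ) (star (PhiPlus N d))

/- ### Auxiliary lemmas -/

lemma sliceProd_mul (N d : ℕ) [NeZero N] (A B : ZMod N → Matrix (Fin d) (Fin d) ℂ) :
    sliceProd N d A * sliceProd N d B = sliceProd N d (fun t => A t * B t) := by
  ext f g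
  simp only [sliceProd, Matrix.mul_apply, Matrix.of_apply]
  rw [Fintype.prod_sum (fun t (x : Fin d) => A t (f t) x * B t x (g t))]
  exact Finset.sum_congr rfl fun h _ => (Finset.prod_mul_distrib).symm

lemma sliceProd_conjTranspose (N d : ℕ) [NeZero N] (A : ZMod N → Matrix (Fin d) (Fin d) ℂ) :
    (sliceProd N d A)ᴴ = sliceProd N d (fun t => (A t)ᴴ) := by
  ext f g
  simp [sliceProd, Matrix.conjTranspose_apply, star_prod]

lemma V_conj_rho0 (N d : ℕ) [NeZero N] (H : Matrix (Fin d) (Fin d) ℂ) (hH : H.IsHermitian)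
    (ε : ℝ) (ρ : Matrix (Fin d) (Fin d) ℂ) :
    Vop N d H ε * sliceLocal N d ρ 0 * (Vop N d H ε)ᴴ = sliceLocal N d ρ 0 := by
  rw [Vop, sliceLocal, sliceProd_conjTranspose, sliceProd_mul, sliceProd_mul]
  apply congrArg (sliceProd N d)
  funext t
  by_cases ht : t = 0
  · subst ht
    simp [ZMod.val_zero]
  · have hstar : ((Complex.I * (ε : ℂ) * (t.val : ℂ)) • H)ᴴ =
        (-(Complex.I * (ε : ℂ) * (t.val : ℂ))) • H := by
      rw [Matrix.conjTranspose_smul, hH.eq]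
      congr 1
      simp only [star_mul', Complex.star_def, Complex.conj_I, Complex.conj_ofReal,
        Complex.conj_natCast]
      ring
    rw [if_neg ht, mul_one, ← Matrix.exp_conjTranspose, hstar,
      ← Matrix.exp_add_of_commute]
    · simp
    · exact (Commute.refl H).smul_left _ |>.smul_right _

lemma const_of_steps (N : ℕ) [NeZero N] {α : Type*} (f : ZMod N → α)
    (h : ∀ t : ZMod N, t ≠ 0 → f t = f (t - 1)) : ∀ t, f t = f 0 := by
  have key : ∀ k : ℕ, ∀ t : ZMod N, t.val = k → f t = f 0 := by
    intro k
    induction k with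
    | zero =>
      intro t ht
      rw [(ZMod.val_eq_zero t).1 ht]
    | succ k ih =>
      intro t ht
      have ht0 : t ≠ 0 := by
        intro h0; rw [h0, ZMod.val_zero] at ht; exact Nat.succ_ne_zero k ht.symm
      have hk : k < N := by
        have := ZMod.val_lt t; omega
      have hsub : t - 1 = ((k : ℕ) : ZMod N) := by
        have : t = ((k + 1 : ℕ) : ZMod N) := by
          rw [← ht, ZMod.natCast_zmod_val]
        rw [this]; push_cast; ring
      have hval : (t - 1).val = k := by
        rw [hsub, ZMod.val_cast_of_lt hk]
      rw [h t ht0, ih (t - 1) hval]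
  intro t
  exact key t.val t rfl

lemma trace_rho0_shift (N d : ℕ) [NeZero N] (ρ : Matrix (Fin d) (Fin d) ℂ) :
    Matrix.trace (sliceLocal N d ρ 0 * timeShift N d) = Matrix.trace ρ := by
  classical
  have hcond : ∀ f g : ZMod N → Fin d,
      (∀ t : ZMod N, f t = g (t - 1)) ↔ g = fun t => f (t + 1) := by
    intro f g
    constructor
    · intro h; funext t
      have := h (t + 1); simpa using this.symm
    · intro h; intro t; rw [h]; simp
  simp only [Matrix.trace, Matrix.diag_apply, Matrix.mul_apply, timeShift, sliceLocal,
    sliceProd, Matrix.of_apply]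
  have step1 : ∀ f : ZMod N → Fin d,
      (∑ g : ZMod N → Fin d, (∏ t : ZMod N, (if t = 0 then ρ else 1) (f t) (g t)) *
        (if ∀ t : ZMod N, g t = f (t - 1) then (1:ℂ) else 0)) =
      ∏ t : ZMod N, (if t = 0 then ρ else 1) (f t) (f (t - 1)) := by
    intro f
    have : ∀ g : ZMod N → Fin d,
        (∀ t : ZMod N, g t = f (t - 1)) ↔ g = fun t => f (t - 1) := by
      intro g; exact funext_iff.symm
    simp only [this, mul_ite, mul_one, mul_zero]
    rw [Finset.sum_ite_eq' Finset.univ (fun t => f (t - 1))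
      (fun g => ∏ t : ZMod N, (if t = 0 then ρ else 1) (f t) (g t))]
    simp
  rw [Finset.sum_congr rfl fun f _ => step1 f]
  have step2 : ∀ f : ZMod N → Fin d,
      (∏ t : ZMod N, (if t = 0 then ρ else 1) (f t) (f (t - 1))) =
      ∑ c : Fin d, if f = (fun _ => c) then ρ c c else 0 := by
    intro f
    rw [Fintype.prod_eq_mul_prod_compl (0 : ZMod N)]
    by_cases hf : ∀ t ∈ ({(0 : ZMod N)}ᶜ : Finset (ZMod N)), f t = f (t - 1)
    · have hprod : (∏ t ∈ ({(0 : ZMod N)}ᶜ : Finset (ZMod N)),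
          (if t = 0 then ρ else 1) (f t) (f (t - 1))) = 1 := by
        apply Finset.prod_eq_one
        intro t ht
        rw [if_neg (by simpa using ht), Matrix.one_apply, if_pos (hf t ht)]
      have hc : ∀ t, f t = f 0 :=
        const_of_steps N f (fun t ht => hf t (by simpa using ht))
      have hfc : f = fun _ => f 0 := funext hc
      rw [hprod, mul_one]
      rw [Finset.sum_eq_single (f 0)]
      · rw [if_pos hfc, hc (0 - 1)]; simp
      · intro c _ hc'
        rw [if_neg]
        intro h
        exact hc' (congrFun h 0).symm
      · intro h; exact absurd (Finset.mem_univ _) h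
    · push_neg at hf
      obtain ⟨t, ht, hneq⟩ := hf
      have hprod : (∏ t ∈ ({(0 : ZMod N)}ᶜ : Finset (ZMod N)),
          (if t = 0 then ρ else 1) (f t) (f (t - 1))) = 0 := by
        apply Finset.prod_eq_zero ht
        rw [if_neg (by simpa using ht), Matrix.one_apply, if_neg hneq]
      rw [hprod, mul_zero]
      symm
      apply Finset.sum_eq_zero
      intro c _
      rw [if_neg]
      intro h
      apply hneq
      rw [h]
  rw [Finset.sum_congr rfl fun f _ => step2 f, Finset.sum_comm]
  simp [Matrix.trace, Matrix.diag_apply]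

lemma vecMulVec_mul_vecMulVec {n : Type*} [Fintype n] (u v w x : n → ℂ) :
    Matrix.vecMulVec u v * Matrix.vecMulVec w x =
      (dotProduct v w) • Matrix.vecMulVec u x := by
  ext i j
  simp only [Matrix.mul_apply, Matrix.vecMulVec_apply, Matrix.smul_apply,
    dotProduct, smul_eq_mul, Finset.sum_mul]
  exact Finset.sum_congr rfl fun k _ => by ring

/-- The generalized state `R` is a (non-Hermitian) rank-one projector purifying the
spacetime state `G = ρ₀ e^{iS̃}`: `⟨Φ⁺|Ψ⟩ = Tr G = tr ρ`, `R² = R`, `Tr R = 1`, and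
the partial trace of `R` over the environment factor equals `(tr ρ)⁻¹ G`. -/
theorem generalized_spacetime_state (N d : ℕ) [NeZero N] (hd : 1 ≤ d)
    (H : Matrix (Fin d) (Fin d) ℂ) (hH : H.IsHermitian) (ε : ℝ)
    (ρ : Matrix (Fin d) (Fin d) ℂ) (hρ : Matrix.trace ρ ≠ 0) :
    (dotProduct (star (PhiPlus N d)) (PsiVec N d H ε ρ) =
        Matrix.trace (Gst N d H ε ρ) ∧
      Matrix.trace (Gst N d H ε ρ) = Matrix.trace ρ) ∧
    Rst N d H ε ρ * Rst N d H ε ρ = Rst N d H ε ρ ∧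
    Matrix.trace (Rst N d H ε ρ) = 1 ∧
    (Matrix.of fun f g => ∑ h : ZMod N → Fin d,
        Rst N d H ε ρ (f, h) (g, h)) =
      (Matrix.trace ρ)⁻¹ • Gst N d H ε ρ := by
  have hdot : dotProduct (star (PhiPlus N d)) (PsiVec N d H ε ρ) =
      Matrix.trace (Gst N d H ε ρ) := by
    simp only [dotProduct, PhiPlus, PsiVec, Pi.star_apply]
    rw [Fintype.sum_prod_type]
    simp [Matrix.trace, Matrix.diag_apply, apply_ite, ite_mul]
  have htr : Matrix.trace (Gst N d H ε ρ) = Matrix.trace ρ := by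
    rw [Gst, ← Matrix.mul_assoc, ← Matrix.mul_assoc,
      Matrix.trace_mul_comm, ← Matrix.mul_assoc, ← Matrix.mul_assoc,
      V_conj_rho0 N d H hH ε ρ, trace_rho0_shift]
  have hτ : dotProduct (star (PhiPlus N d)) (PsiVec N d H ε ρ) = Matrix.trace ρ :=
    hdot.trans htr
  have hτ0 : dotProduct (star (PhiPlus N d)) (PsiVec N d H ε ρ) ≠ 0 := by
    rw [hτ]; exact hρ
  set τ := dotProduct (star (PhiPlus N d)) (PsiVec N d H ε ρ) with hτdef
  refine ⟨⟨hdot, htr⟩, ?_, ?_, ?_⟩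
  · rw [Rst, Matrix.smul_mul, Matrix.mul_smul, smul_smul,
      _root_.vecMulVec_mul_vecMulVec, smul_smul, ← hτdef]
    congr 1
    field_simp
  · rw [Rst, Matrix.trace_smul]
    have : Matrix.trace (Matrix.vecMulVec (PsiVec N d H ε ρ) (star (PhiPlus N d))) = τ := by
      rw [hτdef]
      simp [Matrix.trace, Matrix.diag_apply, Matrix.vecMulVec_apply, dotProduct, mul_comm]
    rw [this, smul_eq_mul, inv_mul_cancel₀ hτ0]
  · ext f g
    simp only [Matrix.of_apply, Rst, Matrix.smul_apply, Matrix.vecMulVec_apply,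
      smul_eq_mul, Matrix.smul_apply, PsiVec, PhiPlus, Pi.star_apply, ← hτdef]
    rw [hτ]
    rw [← Finset.mul_sum]
    congr 1
    simp [apply_ite, mul_ite]
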